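/- Let f : ℝ^m → ℝ^n, let A ⊆ ℝ^m and a ∈ A. Assume that f is differentiable at a, that the differential df|_a is injective, that the restriction f|_A is injective, and that the inverse (f|_A)^{−1} : f(A) → A is continuous at f(a). Then df|_a(Tan(A, a)) = Tan(f(A), f(a)). -/

import Mathlib

open Filter

/-- The tangent cone of `A ⊆ E` at `a`: all `v` such that there is a sequence
`x k ∈ A \ {a}` with `x k → a` whose normalized directions `(x k − a)/‖x k − a‖`
converge to some `w` with `v = ‖v‖ • w`. -/
def tanCone {E : Type*} [NormedAddCommGroup E] [NormedSpace ℝ E]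
    (A : Set E) (a : E) : Set E :=
  {v | ∃ x : ℕ → E, (∀ k, x k ∈ A) ∧ (∀ k, x k ≠ a) ∧
    Tendsto x atTop (nhds a) ∧
    ∃ w : E, Tendsto (fun k => ‖x k - a‖⁻¹ • (x k - a)) atTop (nhds w) ∧
      v = ‖v‖ • w}

lemma key_aux {E F : Type*} [NormedAddCommGroup E] [NormedSpace ℝ E]
    [NormedAddCommGroup F] [NormedSpace ℝ F]
    {f : E → F} {a : E} {df : E →L[ℝ] F} (hdiff : HasFDerivAt f df a)
    (x : ℕ → E) (hx : Tendsto x atTop (nhds a)) {w : E}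
    (hu : Tendsto (fun k => ‖x k - a‖⁻¹ • (x k - a)) atTop (nhds w)) :
    Tendsto (fun k => ‖x k - a‖⁻¹ • (f (x k) - f a)) atTop (nhds (df w)) := by
  have hlo := (hdiff.isLittleO.norm_right.comp_tendsto hx).tendsto_inv_smul_nhds_zero
  have h1 : Tendsto (fun k => df (‖x k - a‖⁻¹ • (x k - a))) atTop (nhds (df w)) :=
    (df.continuous.tendsto w).comp hu
  have heq : ∀ k, ‖x k - a‖⁻¹ • (f (x k) - f a)
      = df (‖x k - a‖⁻¹ • (x k - a)) + ‖x k - a‖⁻¹ • (f (x k) - f a - df (x k - a)) := by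
    intro k
    simp [map_smul, smul_sub]
  simp only [heq]
  simpa using h1.add hlo

lemma norm_limit_one {E : Type*} [NormedAddCommGroup E] [NormedSpace ℝ E]
    {x : ℕ → E} {a : E} (hne : ∀ k, x k ≠ a) {w : E}
    (hu : Tendsto (fun k => ‖x k - a‖⁻¹ • (x k - a)) atTop (nhds w)) : ‖w‖ = 1 := by
  have h2 : Tendsto (fun k => ‖‖x k - a‖⁻¹ • (x k - a)‖) atTop (nhds ‖w‖) :=
    (continuous_norm.tendsto w).comp hu
  have h1 : ∀ k, ‖‖x k - a‖⁻¹ • (x k - a)‖ = 1 := by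
    intro k
    have h3 : x k - a ≠ 0 := sub_ne_zero.mpr (hne k)
    rw [norm_smul, norm_inv, norm_norm, inv_mul_cancel₀ (norm_ne_zero_iff.mpr h3)]
  simp only [h1] at h2
  exact (tendsto_nhds_unique tendsto_const_nhds h2).symm

lemma normalize_smul {F : Type*} [NormedAddCommGroup F] [NormedSpace ℝ F]
    (t : ℝ) (ht : 0 < t) (z : F) : ‖t⁻¹ • z‖⁻¹ • (t⁻¹ • z) = ‖z‖⁻¹ • z := by
  rw [norm_smul, Real.norm_eq_abs, abs_inv, abs_of_pos ht, mul_inv, inv_inv,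
    smul_smul]
  congr 1
  field_simp

lemma tendsto_normalize {F : Type*} [NormedAddCommGroup F] [NormedSpace ℝ F]
    {r : ℕ → F} {c : F} (h : Tendsto r atTop (nhds c)) (hc : c ≠ 0) :
    Tendsto (fun k => ‖r k‖⁻¹ • r k) atTop (nhds (‖c‖⁻¹ • c)) :=
  (((continuous_norm.tendsto c).comp h).inv₀ (norm_ne_zero_iff.mpr hc)).smul h

theorem tangent_cone_image
    (m n : ℕ)
    (f : EuclideanSpace ℝ (Fin m) → EuclideanSpace ℝ (Fin n))
    (A : Set (EuclideanSpace ℝ (Fin m))) (a : EuclideanSpace ℝ (Fin m)) (ha : a ∈ A)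
    (df : EuclideanSpace ℝ (Fin m) →L[ℝ] EuclideanSpace ℝ (Fin n))
    (hdiff : HasFDerivAt f df a)
    (hdf_inj : Function.Injective df)
    (hf_inj : Set.InjOn f A)
    (hinv_cont : ContinuousWithinAt (Function.invFunOn f A) (f '' A) (f a)) :
    df '' tanCone A a = tanCone (f '' A) (f a) := by
  apply Set.Subset.antisymm
  · -- forward inclusion
    rintro _ ⟨v, ⟨x, hxA, hxne, hx, w, hu, hveq⟩, rfl⟩
    have hw1 : ‖w‖ = 1 := norm_limit_one hxne hu
    have hdfw : df w ≠ 0 := by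
      intro h
      have : w = 0 := hdf_inj (h.trans (map_zero df).symm)
      rw [this] at hw1; simp at hw1
    have hr := key_aux hdiff x hx hu
    have hpos : ∀ k, (0:ℝ) < ‖x k - a‖ := fun k =>
      norm_pos_iff.mpr (sub_ne_zero.mpr (hxne k))
    refine ⟨fun k => f (x k), fun k => ⟨x k, hxA k, rfl⟩,
      fun k h => hxne k (hf_inj (hxA k) ha h),
      (hdiff.continuousAt.tendsto).comp hx, ‖df w‖⁻¹ • df w, ?_, ?_⟩
    · have heq : ∀ k, ‖f (x k) - f a‖⁻¹ • (f (x k) - f a)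
          = ‖‖x k - a‖⁻¹ • (f (x k) - f a)‖⁻¹ • (‖x k - a‖⁻¹ • (f (x k) - f a)) :=
        fun k => (normalize_smul _ (hpos k) _).symm
      simp only [heq]
      exact tendsto_normalize hr hdfw
    · have h1 : df v = ‖v‖ • df w := by
        conv_lhs => rw [hveq]
        exact map_smul df ‖v‖ w
      have h2 : ‖df v‖ = ‖v‖ * ‖df w‖ := by
        rw [h1, norm_smul, Real.norm_eq_abs, abs_of_nonneg (norm_nonneg v)]
      rw [h2, h1, smul_smul, mul_assoc, mul_inv_cancel₀ (norm_ne_zero_iff.mpr hdfw),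
        mul_one]
  · -- reverse inclusion
    rintro u ⟨y, hyA, hyne, hy, w, hw, hueq⟩
    set g := Function.invFunOn f A with hg
    set x : ℕ → EuclideanSpace ℝ (Fin m) := fun k => g (y k) with hxdef
    have hex : ∀ k, ∃ x' ∈ A, f x' = y k := fun k => hyA k |>.imp fun x' h => ⟨h.1, h.2⟩
    have hxA : ∀ k, x k ∈ A := fun k => Function.invFunOn_mem (hex k)
    have hfx : ∀ k, f (x k) = y k := fun k => Function.invFunOn_eq (hex k)
    have hga : g (f a) = a := hf_inj.leftInvOn_invFunOn ha
    have hx : Tendsto x atTop (nhds a) := by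
      have h1 : Tendsto y atTop (nhdsWithin (f a) (f '' A)) :=
        tendsto_nhdsWithin_of_tendsto_nhds_of_eventually_within y hy
          (Eventually.of_forall hyA)
      have h2 := hinv_cont.tendsto.comp h1
      rwa [hga] at h2
    have hxne : ∀ k, x k ≠ a := fun k h => hyne k (by rw [← hfx k, h])
    have hpos : ∀ k, (0:ℝ) < ‖x k - a‖ := fun k =>
      norm_pos_iff.mpr (sub_ne_zero.mpr (hxne k))
    have hmem : ∀ k, ‖x k - a‖⁻¹ • (x k - a) ∈ Metric.sphere (0 : EuclideanSpace ℝ (Fin m)) 1 := by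
      intro k
      rw [mem_sphere_zero_iff_norm, norm_smul, norm_inv, norm_norm,
        inv_mul_cancel₀ (ne_of_gt (hpos k))]
    obtain ⟨w', hw's, φ, hφ, hlim⟩ :=
      (isCompact_sphere (0 : EuclideanSpace ℝ (Fin m)) 1).tendsto_subseq hmem
    have hw'1 : ‖w'‖ = 1 := mem_sphere_zero_iff_norm.mp hw's
    have hdfw' : df w' ≠ 0 := by
      intro h
      have : w' = 0 := hdf_inj (h.trans (map_zero df).symm)
      rw [this] at hw'1; simp at hw'1
    have hlim' : Tendsto (fun j => ‖(x ∘ φ) j - a‖⁻¹ • ((x ∘ φ) j - a)) atTop (nhds w') := hlim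
    have hr := key_aux hdiff (x ∘ φ) (hx.comp hφ.tendsto_atTop) hlim'
    -- identify w
    have hsub : Tendsto (fun j => ‖y (φ j) - f a‖⁻¹ • (y (φ j) - f a)) atTop (nhds w) :=
      hw.comp hφ.tendsto_atTop
    have heq : ∀ j, ‖y (φ j) - f a‖⁻¹ • (y (φ j) - f a)
        = ‖‖x (φ j) - a‖⁻¹ • (f (x (φ j)) - f a)‖⁻¹ • (‖x (φ j) - a‖⁻¹ • (f (x (φ j)) - f a)) := by
      intro j
      rw [normalize_smul _ (hpos (φ j)), hfx]
    simp only [heq] at hsub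
    have hwval : w = ‖df w'‖⁻¹ • df w' :=
      tendsto_nhds_unique hsub (tendsto_normalize hr hdfw')
    set c : ℝ := ‖df w'‖ with hc
    have hcpos : 0 < c := norm_pos_iff.mpr hdfw'
    refine ⟨(‖u‖ / c) • w', ⟨x ∘ φ, fun j => hxA (φ j), fun j => hxne (φ j),
      hx.comp hφ.tendsto_atTop, w', hlim', ?_⟩, ?_⟩
    · rw [norm_smul, Real.norm_eq_abs, abs_of_nonneg (by positivity), hw'1, mul_one]
    · rw [map_smul]
      conv_rhs => rw [hueq, hwval]
      rw [smul_smul, div_eq_mul_inv]
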